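/- Neither the class H^1 of λ-ho-term-graphs over Σλ^1 nor the class HAP^1 of λ-ap-ho-term-graphs over Σλ^1 is closed under functional bisimulations on the underlying term graphs: there exist a λ-ho-term-graph G ∈ H^1 (respectively G ∈ HAP^1), a Σλ^1-term-graph G' and a homomorphism h from the underlying term graph of G to G' such that there is no scope function (respectively no correct abstraction-prefix function) on G' making h a homomorphism of λ-ho-term-graphs (respectively of λ-ap-ho-term-graphs) from G to the resulting enriched graph. -/

import Mathlib

/-! Common framework: term graphs over a signature, homomorphisms, bisimulations,
    access paths, λ-ho-term-graphs, λ-ap-ho-term-graphs, λ-term-graphs with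
    scope delimiters, and the translation constructions. -/

inductive Lab3 : Type
  | app | lam | var
  deriving DecidableEq

/-- Arity function of the signature Σλ^i = {@, λ, 0} with ar(@)=2, ar(λ)=1, ar(0)=i. -/
def ar3 (i : ℕ) : Lab3 → ℕ
  | .app => 2
  | .lam => 1
  | .var => i

inductive Lab4 : Type
  | app | lam | var | del
  deriving DecidableEq

/-- Arity function of Σλ^{i,j} = {@, λ, 0, S} with ar(@)=2, ar(λ)=1, ar(0)=i, ar(S)=j. -/
def ar4 (i j : ℕ) : Lab4 → ℕ
  | .app => 2
  | .lam => 1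
  | .var => i
  | .del => j

def lab3to4 : Lab3 → Lab4
  | .app => .app
  | .lam => .lam
  | .var => .var

def lab4to3 : Lab4 → Lab3
  | .app => .app
  | .lam => .lam
  | .var => .var
  | .del => .var

/-- A term graph over a signature: vertex labelling, argument (successor) lists of
    length matching the arity of the label, a root, and every vertex reachable
    from the root. -/
structure TermGraph (L : Type) (ar : L → ℕ) (V : Type) where
  lab : V → L
  args : V → List V
  root : V
  args_len : ∀ v, (args v).length = ar (lab v)
  reach : ∀ v, Relation.ReflTransGen (fun a b => b ∈ args a) root v

namespace TermGraph

variable {L V : Type} {ar : L → ℕ}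

/-- `G.Succ k w w'` : `w'` is the `k`-th successor of `w` (the edge w ↣_k w'). -/
def Succ (G : TermGraph L ar V) (k : ℕ) (w w' : V) : Prop :=
  (G.args w)[k]? = some w'

/-- `G.Edge w w'` : `w'` is some successor of `w` (the relation ↣). -/
def Edge (G : TermGraph L ar V) (w w' : V) : Prop :=
  w' ∈ G.args w

/-- Reachability ↠ along edges. -/
def Reaches (G : TermGraph L ar V) (w w' : V) : Prop :=
  Relation.ReflTransGen G.Edge w w'

end TermGraph

/-- Homomorphism (functional bisimulation) of term graphs. -/
def IsHom {L V₁ V₂ : Type} {ar : L → ℕ} (h : V₁ → V₂)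
    (G₁ : TermGraph L ar V₁) (G₂ : TermGraph L ar V₂) : Prop :=
  (∀ v, G₂.lab (h v) = G₁.lab v) ∧
  (∀ v, G₂.args (h v) = (G₁.args v).map h) ∧
  h G₁.root = G₂.root

/-- Bisimulation between term graphs: a term graph on a set of pairs, rooted at the
    pair of roots, whose two projections are homomorphisms. -/
def Bisim {L V₁ V₂ : Type} {ar : L → ℕ}
    (G₁ : TermGraph L ar V₁) (G₂ : TermGraph L ar V₂) : Prop :=
  ∃ (S : Set (V₁ × V₂)) (R : TermGraph L ar S),
    (R.root : V₁ × V₂) = (G₁.root, G₂.root) ∧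
    IsHom (fun x : S => x.val.1) R G₁ ∧
    IsHom (fun x : S => x.val.2) R G₂

/-- An access path of a vertex `w`: a path from the root to `w` (with edge indices)
    that visits no vertex twice. -/
structure AccessPath {L V : Type} {ar : L → ℕ} (G : TermGraph L ar V) (w : V) where
  n : ℕ
  vs : Fin (n + 1) → V
  ks : Fin n → ℕ
  start : vs 0 = G.root
  finish : vs (Fin.last n) = w
  step : ∀ m : Fin n, G.Succ (ks m) (vs m.castSucc) (vs m.succ)
  inj : Function.Injective vs

/-- The conditions (root), (self), (nest), (closed), (scope)₀ and (for i = 1) (scope)₁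
    on a scope function. -/
def ScopeConds (i : ℕ) {V : Type} (G : TermGraph Lab3 (ar3 i) V)
    (Sc : V → Set V) : Prop :=
  (∀ v, G.lab v = .lam → G.root ∉ Sc v \ {v}) ∧
  (∀ v, G.lab v = .lam → v ∈ Sc v) ∧
  (∀ v₀ v₁, G.lab v₀ = .lam → G.lab v₁ = .lam → v₁ ∈ Sc v₀ \ {v₀} →
      Sc v₁ ⊆ Sc v₀ \ {v₀}) ∧
  (∀ v w wk k, G.lab v = .lam → G.Succ k w wk → wk ∈ Sc v \ {v} → w ∈ Sc v) ∧
  (∀ w, G.lab w = .var → ∃ v, G.lab v = .lam ∧ w ∈ Sc v \ {v}) ∧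
  (i = 1 → ∀ w w₀, G.lab w = .var → G.Succ 0 w w₀ →
      G.lab w₀ = .lam ∧ ∀ v, G.lab v = .lam → (w ∈ Sc v ↔ w₀ ∈ Sc v))

/-- λ-ho-term-graph over Σλ^i: a Σλ^i-term-graph endowed with a scope function. -/
structure LamHoTG (i : ℕ) (V : Type) extends TermGraph Lab3 (ar3 i) V where
  Sc : V → Set V
  conds : ScopeConds i toTermGraph Sc

/-- Correctness of an abstraction-prefix function for a Σλ^i-term-graph:
    (root), (λ), (@), (0)₀, and (for i = 1) (0)₁. -/
def CorrectAP (i : ℕ) {V : Type} (G : TermGraph Lab3 (ar3 i) V)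
    (P : V → List V) : Prop :=
  (P G.root = []) ∧
  (∀ w w₀, G.lab w = .lam → G.Succ 0 w w₀ → P w₀ <+: P w ++ [w]) ∧
  (∀ w wk k, G.lab w = .app → G.Succ k w wk → P wk <+: P w) ∧
  (∀ w, G.lab w = .var → P w ≠ []) ∧
  (i = 1 → ∀ w w₀, G.lab w = .var → G.Succ 0 w w₀ →
      G.lab w₀ = .lam ∧ P w₀ ++ [w₀] = P w)

/-- λ-ap-ho-term-graph over Σλ^i: a Σλ^i-term-graph endowed with a correct
    abstraction-prefix function. -/
structure LamApHoTG (i : ℕ) (V : Type) extends TermGraph Lab3 (ar3 i) V where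
  P : V → List V
  correct : CorrectAP i toTermGraph P

/-- `ScToP G Sc P` : the abstraction-prefix function `P` is the one obtained from the
    scope function `Sc` by the mapping A_i: for each vertex `w`, `P w` lists exactly
    the binders of `w` other than `w` itself, in order of strictly decreasing scopes. -/
def ScToP {i : ℕ} {V : Type} (G : TermGraph Lab3 (ar3 i) V)
    (Sc : V → Set V) (P : V → List V) : Prop :=
  ∀ w, (∀ v, v ∈ P w ↔ (G.lab v = .lam ∧ w ∈ Sc v ∧ v ≠ w)) ∧
    (P w).Chain' (fun a b => Sc b ⊂ Sc a)

/-- The scope function obtained from an abstraction-prefix function by the mapping B_i: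
    Sc(v) = { w | v occurs in P(w) } ∪ {v}. -/
def ScOfP {V : Type} (P : V → List V) : V → Set V :=
  fun v => {w | v ∈ P w} ∪ {v}

/-- Homomorphism of λ-ho-term-graphs (given by their underlying term graphs and
    scope functions). -/
def IsHoHom {i : ℕ} {V₁ V₂ : Type} (h : V₁ → V₂)
    (G₁ : TermGraph Lab3 (ar3 i) V₁) (Sc₁ : V₁ → Set V₁)
    (G₂ : TermGraph Lab3 (ar3 i) V₂) (Sc₂ : V₂ → Set V₂) : Prop :=
  IsHom h G₁ G₂ ∧ ∀ v, G₁.lab v = .lam → h '' Sc₁ v = Sc₂ (h v)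

/-- Homomorphism of λ-ap-ho-term-graphs (given by their underlying term graphs and
    abstraction-prefix functions). -/
def IsApHom {i : ℕ} {V₁ V₂ : Type} (h : V₁ → V₂)
    (G₁ : TermGraph Lab3 (ar3 i) V₁) (P₁ : V₁ → List V₁)
    (G₂ : TermGraph Lab3 (ar3 i) V₂) (P₂ : V₂ → List V₂) : Prop :=
  IsHom h G₁ G₂ ∧ ∀ v, (P₁ v).map h = P₂ (h v)

/-- Correctness of an abstraction-prefix function for a Σλ^{i,j}-term-graph:
    (root), (λ), (@), (0)₀, (0)₁ (for i = 1), (S)₁, and (S)₂ (for j = 2). -/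
def CorrectAP4 (i j : ℕ) {V : Type} (G : TermGraph Lab4 (ar4 i j) V)
    (P : V → List V) : Prop :=
  (P G.root = []) ∧
  (∀ w w₀, G.lab w = .lam → G.Succ 0 w w₀ → P w₀ = P w ++ [w]) ∧
  (∀ w wk k, G.lab w = .app → G.Succ k w wk → P wk = P w) ∧
  (∀ w, G.lab w = .var → P w ≠ []) ∧
  (i = 1 → ∀ w w₀, G.lab w = .var → G.Succ 0 w w₀ →
      G.lab w₀ = .lam ∧ P w₀ ++ [w₀] = P w) ∧
  (∀ w w₀, G.lab w = .del → G.Succ 0 w w₀ → ∃ v, P w₀ ++ [v] = P w) ∧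
  (j = 2 → ∀ w w₁, G.lab w = .del → G.Succ 1 w w₁ →
      G.lab w₁ = .lam ∧ P w₁ ++ [w₁] = P w)

/-- Vertex-set predicate of the construction G_i^j: original vertices (inl) together
    with scope-delimiter vertices (w, k, w', p) inserted along an edge w ↣_k w',
    one for each prefix p with P(w') < p ≤ P(w)·w (for λ-vertices w),
    resp. P(w') < p ≤ P(w) (for @-vertices w). -/
def GVP {i : ℕ} {V : Type} (G : TermGraph Lab3 (ar3 i) V) (P : V → List V) :
    V ⊕ (V × ℕ × V × List V) → Prop
  | .inl _ => True
  | .inr (w, k, w', p) =>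
      G.Succ k w w' ∧ P w' <+: p ∧ P w' ≠ p ∧
      ((G.lab w = .lam ∧ p <+: P w ++ [w]) ∨ (G.lab w = .app ∧ p <+: P w))

/-- Vertex set of the image of G_i^j. -/
def GVert {i : ℕ} {V : Type} (G : TermGraph Lab3 (ar3 i) V) (P : V → List V) : Type :=
  { x : V ⊕ (V × ℕ × V × List V) // GVP G P x }

/-- Labelling of the image of G_i^j: original labels on original vertices,
    `S` on the inserted delimiter vertices. -/
def GLab {i : ℕ} {V : Type} (G : TermGraph Lab3 (ar3 i) V) (P : V → List V)
    (x : GVert G P) : Lab4 :=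
  match x.val with
  | .inl w => lab3to4 (G.lab w)
  | .inr _ => .del

/-- The successor relation of the image of G_i^j (clauses as in the definition of
    the mapping G_i^j; for j = 2 the inserted S-vertices carry a 1-indexed back-link
    to the abstraction vertex whose extended scope they close). -/
def CSucc {i : ℕ} {V : Type} (j : ℕ) (G : TermGraph Lab3 (ar3 i) V) (P : V → List V)
    (k : ℕ) (x y : GVert G P) : Prop :=
  (∃ w wk, x.val = .inl w ∧ y.val = .inl wk ∧ G.Succ k w wk ∧
     (G.lab w = .var ∨ (G.lab w = .lam ∧ P wk = P w ++ [w]) ∨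
      (G.lab w = .app ∧ P wk = P w))) ∨
  (∃ w w₀, x.val = .inl w ∧ G.lab w = .lam ∧ G.Succ 0 w w₀ ∧ P w₀ ≠ P w ++ [w] ∧
     k = 0 ∧ y.val = .inr (w, 0, w₀, P w ++ [w])) ∨
  (∃ w wk, x.val = .inl w ∧ G.lab w = .app ∧ G.Succ k w wk ∧ P wk ≠ P w ∧
     y.val = .inr (w, k, wk, P w)) ∨
  (∃ w k' w' p v, x.val = .inr (w, k', w', p ++ [v]) ∧ k = 0 ∧ P w' ≠ p ∧
     y.val = .inr (w, k', w', p)) ∨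
  (∃ w k' w' v, x.val = .inr (w, k', w', P w' ++ [v]) ∧ k = 0 ∧ y.val = .inl w') ∨
  (j = 2 ∧ ∃ w k' w' p v, x.val = .inr (w, k', w', p ++ [v]) ∧ k = 1 ∧ y.val = .inl v)

/-- `IsGImage i j G P G'` : the Σλ^{i,j}-term-graph `G'` is the image of the
    λ-ap-ho-term-graph given by `G` and `P` under the mapping G_i^j. -/
def IsGImage (i j : ℕ) {V : Type} (G : TermGraph Lab3 (ar3 i) V) (P : V → List V)
    (G' : TermGraph Lab4 (ar4 i j) (GVert G P)) : Prop :=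
  (G'.root).val = .inl G.root ∧
  (∀ x, G'.lab x = GLab G P x) ∧
  (∀ k x y, G'.Succ k x y ↔ CSucc j G P k x y)

/-- One step along the 0-indexed edge of a scope-delimiter vertex. -/
def DelStep {i j : ℕ} {V : Type} (G : TermGraph Lab4 (ar4 i j) V) (a b : V) : Prop :=
  G.lab a = .del ∧ G.Succ 0 a b

/-- The non-delimiter vertices of a Σλ^{i,j}-term-graph. -/
def NVert {i j : ℕ} {V : Type} (G : TermGraph Lab4 (ar4 i j) V) : Type :=
  { v : V // G.lab v ≠ .del }

/-- `IsNImage i j G P G' P'` : the Σλ^i-term-graph `G'` with abstraction-prefix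
    function `P'` is the image of the λ-term-graph `G` (with correct prefix
    function `P`) under the mapping N_i^j: S-vertices are deleted, labels and the
    prefix function are restricted, the root is kept, and w₀ ↣'_k w₁ holds iff
    w₁ is reached from the k-th successor of w₀ by passing through finitely many
    S-vertices along their 0-indexed edges. -/
def IsNImage (i j : ℕ) {V : Type} (G : TermGraph Lab4 (ar4 i j) V) (P : V → List V)
    (G' : TermGraph Lab3 (ar3 i) (NVert G)) (P' : NVert G → List (NVert G)) : Prop :=
  (G'.root).val = G.root ∧
  (∀ x : NVert G, G'.lab x = lab4to3 (G.lab x.val)) ∧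
  (∀ k (a b : NVert G), G'.Succ k a b ↔
      ∃ u, G.Succ k a.val u ∧ Relation.ReflTransGen (DelStep G) u b.val) ∧
  (∀ v : NVert G, (P' v).map Subtype.val = P v.val)

/-- A λ-term-graph over Σλ^{1,2} (given by `G` with correct prefix function `P`) is
    fully back-linked if the last vertex of the abstraction prefix of any vertex `w`
    is reachable from `w`. -/
def FullyBackLinked {V : Type} (G : TermGraph Lab4 (ar4 1 2) V)
    (P : V → List V) : Prop :=
  ∀ w v p, P w = p ++ [v] → G.Reaches w v

/-- Eager-scope: whenever P(w) = p·v there is a path from `w` to `v` which ends with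
    a 0-indexed edge from a variable vertex to `v`, and all of whose intermediate
    vertices have abstraction prefixes extending P(w). -/
def EagerScope {V : Type} (G : TermGraph Lab4 (ar4 1 2) V)
    (P : V → List V) : Prop :=
  ∀ w v p, P w = p ++ [v] →
    ∃ (n : ℕ) (u : Fin (n + 1) → V),
      u 0 = w ∧
      (∀ m : Fin n, G.Edge (u m.castSucc) (u m.succ)) ∧
      G.Succ 0 (u (Fin.last n)) v ∧
      G.lab (u (Fin.last n)) = .var ∧
      ∀ m : Fin (n + 1), m ≠ 0 → P w <+: P (u m)

/-! Counterexample construction -/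

/-- Vertices: 0 = λa (root), 1 = @, 2 = λb, 3 = @ (inside b), 4 = @ (outside b),
    5 = variable bound by a. -/
def cexG : TermGraph Lab3 (ar3 1) (Fin 6) where
  lab := ![Lab3.lam, .app, .lam, .app, .app, .var]
  args := ![[1], [2, 4], [3], [5, 5], [5, 5], [0]]
  root := 0
  args_len := by decide
  reach := by
    set e : Fin 6 → Fin 6 → Prop :=
      fun a b => b ∈ (![[1], [2, 4], [3], [5, 5], [5, 5], [0]] : Fin 6 → List (Fin 6)) a with he
    have r1 : Relation.ReflTransGen e 0 1 := .tail .refl (by rw [he]; decide)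
    have r2 : Relation.ReflTransGen e 0 2 := r1.tail (by rw [he]; decide)
    have r3 : Relation.ReflTransGen e 0 3 := r2.tail (by rw [he]; decide)
    have r4 : Relation.ReflTransGen e 0 4 := r1.tail (by rw [he]; decide)
    have r5 : Relation.ReflTransGen e 0 5 := r3.tail (by rw [he]; decide)
    intro v
    fin_cases v
    exacts [.refl, r1, r2, r3, r4, r5]

def cexSc : Fin 6 → Set (Fin 6) :=
  fun v w => v = 0 ∨ (v = 2 ∧ (w = 2 ∨ w = 3))

instance : ∀ v w, Decidable (w ∈ cexSc v) := fun v w => by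
  show Decidable (v = 0 ∨ (v = 2 ∧ (w = 2 ∨ w = 3))); infer_instance

def cexP : Fin 6 → List (Fin 6) := ![[], [0], [0], [0, 2], [0], [0]]

def cexG' : TermGraph Lab3 (ar3 1) (Fin 5) where
  lab := ![Lab3.lam, .app, .lam, .app, .var]
  args := ![[1], [2, 3], [3], [4, 4], [0]]
  root := 0
  args_len := by decide
  reach := by
    set e : Fin 5 → Fin 5 → Prop :=
      fun a b => b ∈ (![[1], [2, 3], [3], [4, 4], [0]] : Fin 5 → List (Fin 5)) a with he
    have r1 : Relation.ReflTransGen e 0 1 := .tail .refl (by rw [he]; decide)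
    have r2 : Relation.ReflTransGen e 0 2 := r1.tail (by rw [he]; decide)
    have r3 : Relation.ReflTransGen e 0 3 := r2.tail (by rw [he]; decide)
    have r4 : Relation.ReflTransGen e 0 4 := r3.tail (by rw [he]; decide)
    intro v
    fin_cases v
    exacts [.refl, r1, r2, r3, r4]

def cexh : Fin 6 → Fin 5 := ![0, 1, 2, 3, 3, 4]

lemma cexIsHom : IsHom cexh cexG cexG' := by
  refine ⟨?_, ?_, rfl⟩ <;> decide

lemma cexSucc (k : ℕ) (w w' : Fin 6) : cexG.Succ k w w' ↔ (cexG.args w)[k]? = some w' :=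
  Iff.rfl

lemma cexScopeConds : ScopeConds 1 cexG cexSc := by
  refine ⟨?_, ?_, ?_, ?_, ?_, ?_⟩
  · intro v hv
    simp only [Set.mem_diff, Set.mem_singleton_iff, not_and, not_not]
    revert hv
    show cexG.lab v = Lab3.lam → _
    fin_cases v <;> decide
  · intro v hv; revert hv
    show cexG.lab v = Lab3.lam → v ∈ cexSc v
    fin_cases v <;> decide
  · intro v₀ v₁ h0 h1 hm x hx
    simp only [Set.mem_diff, Set.mem_singleton_iff] at hm ⊢
    revert h0 h1 hm hx
    show cexG.lab v₀ = Lab3.lam → cexG.lab v₁ = Lab3.lam →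
      x ∈ cexSc v₁ → (v₁ ∈ cexSc v₀ ∧ ¬ v₁ = v₀) → x ∈ cexSc v₀ ∧ ¬ x = v₀
    fin_cases v₀ <;> fin_cases v₁ <;> fin_cases x <;> decide
  · intro v w wk k hv hs hm
    simp only [Set.mem_diff, Set.mem_singleton_iff] at hm
    have hk : k < (cexG.args w).length := by
      by_contra hk
      have hs : (cexG.args w)[k]? = some wk := hs
      rw [List.getElem?_eq_none (le_of_not_gt hk)] at hs
      exact Option.some_ne_none _ hs.symm
    have hk2 : k ≤ 1 := by
      have := cexG.args_len w
      revert hk; rw [this]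
      have : ar3 1 (cexG.lab w) ≤ 2 := by cases cexG.lab w <;> simp [ar3]
      omega
    revert hv hs hm
    show cexG.lab v = Lab3.lam → (cexG.args w)[k]? = some wk →
      (wk ∈ cexSc v ∧ ¬ wk = v) → w ∈ cexSc v
    interval_cases k <;> fin_cases v <;> fin_cases w <;> fin_cases wk <;> decide
  · intro w hw
    revert hw
    show cexG.lab w = Lab3.var → _
    fin_cases w <;> intro hw <;> first
      | exact absurd hw (by decide)
      | exact ⟨0, by decide, by simp only [Set.mem_diff, Set.mem_singleton_iff]; decide⟩
  · intro _ w w₀ hw hs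
    have key : cexG.lab w₀ = Lab3.lam ∧
        ∀ v, cexG.lab v = Lab3.lam → (w ∈ cexSc v ↔ w₀ ∈ cexSc v) := by
      revert hw hs
      show cexG.lab w = Lab3.var → (cexG.args w)[0]? = some w₀ → _
      fin_cases w <;> intro hw hs <;> first
        | exact absurd hw (by decide)
        | · fin_cases w₀ <;> first
              | exact absurd hs (by decide)
              | exact ⟨by decide, fun v => by fin_cases v <;> decide⟩
    exact ⟨key.1, key.2⟩

lemma cexCorrectAP : CorrectAP 1 cexG cexP := by
  refine ⟨rfl, ?_, ?_, ?_, ?_⟩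
  · intro w w₀ hw hs
    revert hw hs
    show cexG.lab w = Lab3.lam → (cexG.args w)[0]? = some w₀ → cexP w₀ <+: cexP w ++ [w]
    fin_cases w <;> intro hw hs <;> first
      | exact absurd hw (by decide)
      | · revert hs; intro hs
          have := hs
          fin_cases w₀ <;> first
            | exact absurd this (by decide)
            | exact ⟨[], by decide⟩ | exact ⟨[2], by decide⟩ | exact ⟨[0], by decide⟩
              | exact ⟨[0,2], by decide⟩
  · intro w wk k hw hs
    have hmem : wk ∈ cexG.args w := List.mem_of_getElem? hs
    revert hw hmem
    show cexG.lab w = Lab3.app → wk ∈ cexG.args w → cexP wk <+: cexP w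
    fin_cases w <;> intro hw hmem <;> first
      | exact absurd hw (by decide)
      | · fin_cases wk <;> first
            | exact absurd hmem (by decide)
            | exact ⟨[], by decide⟩ | exact ⟨[2], by decide⟩
  · intro w hw
    revert hw
    show cexG.lab w = Lab3.var → cexP w ≠ []
    fin_cases w <;> decide
  · intro _ w w₀ hw hs
    revert hw hs
    show cexG.lab w = Lab3.var → (cexG.args w)[0]? = some w₀ →
      cexG.lab w₀ = Lab3.lam ∧ cexP w₀ ++ [w₀] = cexP w
    fin_cases w <;> intro hw hs <;> first
      | exact absurd hw (by decide)
      | · fin_cases w₀ <;> first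
            | exact absurd hs (by decide)
            | exact ⟨by decide, by decide⟩

/-- Proposition 3.7: neither the class of λ-ho-term-graphs over Σλ^1 nor the class of
    λ-ap-ho-term-graphs over Σλ^1 is closed under functional bisimulations on the
    underlying term graphs: there is a homomorphism from the underlying term graph of
    such a graph that does not extend to the enriched graphs. -/
theorem lhotg_laphotg_not_closed_under_underlying_funbisim :
    (∃ (V V' : Type) (G : LamHoTG 1 V) (G' : TermGraph Lab3 (ar3 1) V') (h : V → V'),
      IsHom h G.toTermGraph G' ∧
      ¬ ∃ Sc' : V' → Set V', ScopeConds 1 G' Sc' ∧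
          ∀ v, G.lab v = Lab3.lam → h '' G.Sc v = Sc' (h v)) ∧
    (∃ (V V' : Type) (G : LamApHoTG 1 V) (G' : TermGraph Lab3 (ar3 1) V') (h : V → V'),
      IsHom h G.toTermGraph G' ∧
      ¬ ∃ P' : V' → List V', CorrectAP 1 G' P' ∧
          ∀ v, (G.P v).map h = P' (h v)) := by
  constructor
  · refine ⟨Fin 6, Fin 5, ⟨cexG, cexSc, cexScopeConds⟩, cexG', cexh, cexIsHom, ?_⟩
    rintro ⟨Sc', conds, hext⟩
    have hb : cexh '' cexSc 2 = Sc' 2 := hext 2 (by decide)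
    have h3 : (3 : Fin 5) ∈ Sc' 2 := by
      rw [← hb]
      exact ⟨3, (by decide : (3 : Fin 6) ∈ cexSc 2), by decide⟩
    have hclosed : (1 : Fin 5) ∈ Sc' 2 := by
      refine conds.2.2.2.1 2 1 3 1 (by decide) (show (cexG'.args 1)[1]? = some 3 by decide) ⟨h3, ?_⟩
      simp only [Set.mem_singleton_iff]
      decide
    rw [← hb] at hclosed
    obtain ⟨a, ha, hea⟩ := hclosed
    revert ha hea
    show a ∈ cexSc 2 → cexh a = 1 → False
    fin_cases a <;> decide
  · refine ⟨Fin 6, Fin 5, ⟨cexG, cexP, cexCorrectAP⟩, cexG', cexh, cexIsHom, ?_⟩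
    rintro ⟨P', _, hext⟩
    have h3 := hext 3
    have h4 := hext 4
    have e : cexh 3 = cexh 4 := by decide
    rw [e] at h3
    have : (cexP 3).map cexh = (cexP 4).map cexh := h3.trans h4.symm
    exact absurd this (by decide)
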